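/- Let a, b ∈ ℂ with a ≠ 0 and |b| ≤ |a|, and set m₋ := 1 − conj(b)/conj(a) and m₊ := 1 + conj(b)/conj(a). Then for every ζ ∈ Ω := ℂ ∖ [−1,1], one has m₋·f(ζ) + m₊·ζ ≠ 0. -/

import Mathlib

/-- The slit `[-1,1]`: complex numbers with zero imaginary part and real part in `[-1,1]`. -/
def slit : Set ℂ := {z : ℂ | z.im = 0 ∧ -1 ≤ z.re ∧ z.re ≤ 1}

/-- The cut plane `Ω = ℂ ∖ [-1,1]`. -/
def Omg : Set ℂ := slitᶜ

/-- The branch `f(ζ) = ζ·(1 − ζ⁻²)^{1/2}` of `(ζ² − 1)^{1/2}` with `f(ζ) ~ ζ` at infinity. -/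
noncomputable def fbr (ζ : ℂ) : ℂ := ζ * (1 - ζ⁻¹ ^ 2) ^ ((1 : ℂ) / 2)

/-- The principal square root has positive real part away from `(-∞, 0]`. -/
lemma re_cpow_half_pos {z : ℂ} (hz : z ≠ 0) (harg : Complex.arg z ≠ Real.pi) :
    0 < (z ^ ((1:ℂ)/2)).re := by
  rw [Complex.cpow_def_of_ne_zero hz, Complex.exp_re]
  have him : (Complex.log z * ((1:ℂ)/2)).im = Complex.arg z / 2 := by
    simp [Complex.mul_im, Complex.log_im]; ring
  rw [him]
  have h1 : -(Real.pi/2) < Complex.arg z / 2 := by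
    have := Complex.neg_pi_lt_arg z; linarith
  have h2 : Complex.arg z / 2 < Real.pi/2 := by
    have h := lt_of_le_of_ne (Complex.arg_le_pi z) harg; linarith
  exact mul_pos (Real.exp_pos _) (Real.cos_pos_of_mem_Ioo ⟨h1, h2⟩)

/-- If `1 - ζ⁻²` lies on the negative real axis (or is zero), then `ζ ∈ [-1,1]`. -/
lemma mem_slit_of {ζ : ℂ} (hζ0 : ζ ≠ 0) (h1 : (1 - ζ⁻¹^2).im = 0)
    (h2 : (1 - ζ⁻¹^2).re ≤ 0) : ζ ∈ slit := by
  set x := ζ.re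
  set y := ζ.im
  have hn : 0 < x^2 + y^2 := by
    have := Complex.normSq_pos.mpr hζ0
    simpa [Complex.normSq_apply, sq] using this
  have hnz : x*x + y*y ≠ 0 := by nlinarith
  have hre : (ζ⁻¹^2).re = (x^2 - y^2)/(x^2+y^2)^2 := by
    rw [sq, Complex.mul_re, Complex.inv_re, Complex.inv_im, Complex.normSq_apply]
    simp only [x, y] at hnz ⊢
    field_simp [hnz]
  have him : (ζ⁻¹^2).im = -(2*x*y)/(x^2+y^2)^2 := by
    rw [sq, Complex.mul_im, Complex.inv_re, Complex.inv_im, Complex.normSq_apply]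
    simp only [x, y] at hnz ⊢
    field_simp [hnz]
    ring
  rw [Complex.sub_im, Complex.one_im, him] at h1
  rw [Complex.sub_re, Complex.one_re, hre] at h2
  have hd : (0:ℝ) < (x^2+y^2)^2 := by positivity
  have hxy : x*y = 0 := by
    have := h1
    field_simp at this
    linarith
  have hpoly : (x^2+y^2)^2 ≤ x^2 - y^2 := by
    have h2' : 1 ≤ (x^2-y^2)/(x^2+y^2)^2 := by linarith
    exact (one_le_div hd).mp h2'
  have hy : y = 0 := by
    rcases mul_eq_zero.mp hxy with hx | hy
    · exfalso
      rw [hx] at hpoly hn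
      nlinarith [sq_nonneg y]
    · exact hy
  rw [hy] at hpoly hn
  have hx2 : x^2 ≤ 1 := by nlinarith
  refine ⟨hy, ?_, ?_⟩ <;> nlinarith [sq_nonneg (x-1), sq_nonneg (x+1)]

/-- When `|b| ≤ |a|`, the function `η(ζ) = m₋ f(ζ) + m₊ ζ` has no zeros in the cut plane `Ω`. -/
theorem stmt_6 (a b : ℂ) (ha : a ≠ 0) (hba : ‖b‖ ≤ ‖a‖) :
    ∀ ζ ∈ Omg,
      (1 - (starRingEnd ℂ) b / (starRingEnd ℂ) a) * fbr ζ +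
        (1 + (starRingEnd ℂ) b / (starRingEnd ℂ) a) * ζ ≠ 0 := by
  intro ζ hζ
  have hζs : ζ ∉ slit := hζ
  have hζ0 : ζ ≠ 0 := by
    intro h; exact hζs (by rw [h]; exact ⟨rfl, by norm_num, by norm_num⟩)
  set γ : ℂ := (starRingEnd ℂ) b / (starRingEnd ℂ) a with hγdef
  have hγ : Complex.normSq γ ≤ 1 := by
    have h1 : ‖γ‖ ≤ 1 := by
      rw [hγdef, norm_div]
      simp only [Complex.norm_conj]
      rw [div_le_one (norm_pos_iff.mpr ha)]
      exact hba
    rw [Complex.normSq_eq_norm_sq]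
    nlinarith [norm_nonneg γ]
  set z : ℂ := 1 - ζ⁻¹^2 with hzdef
  have hz0 : z ≠ 0 := by
    intro h
    exact hζs (mem_slit_of hζ0 (by rw [← hzdef, h]; rfl) (by rw [← hzdef, h]; norm_num))
  have harg : Complex.arg z ≠ Real.pi := by
    intro h
    rw [Complex.arg_eq_pi_iff] at h
    exact hζs (mem_slit_of hζ0 h.2 (le_of_lt h.1))
  have hu : 0 < (z ^ ((1:ℂ)/2)).re := re_cpow_half_pos hz0 harg
  set u : ℂ := z ^ ((1:ℂ)/2) with hudef
  intro h
  have h2 : ζ * ((1-γ)*u + (1+γ)) = 0 := by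
    rw [fbr] at h
    linear_combination h
  have h3 : (1-γ)*u + (1+γ) = 0 := (mul_eq_zero.mp h2).resolve_left hζ0
  rcases eq_or_ne γ 1 with h1 | h1
  · rw [h1] at h3; norm_num at h3
  · have hs : (1:ℂ) - γ ≠ 0 := sub_ne_zero.mpr (Ne.symm h1)
    have hS : 0 < (1-γ.re)^2 + γ.im^2 := by
      have := Complex.normSq_pos.mpr hs
      simpa [Complex.normSq_apply, sq] using this
    have hre := congrArg Complex.re h3
    have him := congrArg Complex.im h3
    simp only [Complex.add_re, Complex.add_im, Complex.mul_re, Complex.mul_im,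
      Complex.sub_re, Complex.sub_im, Complex.one_re, Complex.one_im, Complex.zero_re,
      Complex.zero_im] at hre him
    rw [Complex.normSq_apply] at hγ
    have key : u.re * ((1-γ.re)^2 + γ.im^2) + (1 - (γ.re*γ.re + γ.im*γ.im)) = 0 := by
      linear_combination (1-γ.re)*hre - γ.im*him
    linarith [key, hγ, mul_pos hu hS]
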